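/- Let 𝒜 be a complete normed algebra with unit over ℝ (or ℂ), and let A_k, A_p ∈ 𝒜. Define the curve γ : ℝ → 𝒜 by γ(t) = exp(−t A_k) · exp(t (A_k + A_p)). Then γ(0) = 1 and, for every t ∈ ℝ, γ is differentiable at t with derivative γ′(t) = (exp(−t A_k) · A_p · exp(t A_k)) · γ(t). (This is Jurdjevic's closed-form solution of the KP time-optimal control trajectory γ̇(t) = e^{−A_k t} A_p e^{A_k t} γ(t), γ(0) = 1.) -/

import Mathlib

open NormedSpace

private lemma key_deriv {𝕜 : Type*} [RCLike 𝕜] {𝒜 : Type*} [NormedRing 𝒜]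
    [NormedAlgebra 𝕜 𝒜] [CompleteSpace 𝒜] [NormedSpace ℝ 𝒜] [IsScalarTower ℝ 𝕜 𝒜]
    (x : 𝒜) (t : ℝ) :
    HasDerivAt (fun s : ℝ => exp ((s : 𝕜) • x)) (exp ((t : 𝕜) • x) * x) t := by
  have h1 := hasDerivAt_exp_smul_const (𝕂 := 𝕜) x ((t : 𝕜))
  have h2 : HasDerivAt (fun s : ℝ => (s : 𝕜)) 1 t := by
    simpa using (RCLike.ofRealCLM (K := 𝕜)).hasDerivAt (x := t)
  simpa [Function.comp_def] using h1.scomp t h2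

private lemma key_deriv' {𝕜 : Type*} [RCLike 𝕜] {𝒜 : Type*} [NormedRing 𝒜]
    [NormedAlgebra 𝕜 𝒜] [CompleteSpace 𝒜] [NormedSpace ℝ 𝒜] [IsScalarTower ℝ 𝕜 𝒜]
    (x : 𝒜) (t : ℝ) :
    HasDerivAt (fun s : ℝ => exp ((s : 𝕜) • x)) (x * exp ((t : 𝕜) • x)) t := by
  have h1 := hasDerivAt_exp_smul_const' (𝕂 := 𝕜) x ((t : 𝕜))
  have h2 : HasDerivAt (fun s : ℝ => (s : 𝕜)) 1 t := by
    simpa using (RCLike.ofRealCLM (K := 𝕜)).hasDerivAt (x := t)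
  simpa [Function.comp_def] using h1.scomp t h2

/-- Jurdjevic's closed-form solution of the KP time-optimal control problem:
the curve `γ t = exp(-t A_k) * exp(t (A_k + A_p))` satisfies `γ 0 = 1` and
`γ' t = (exp(-t A_k) * A_p * exp(t A_k)) * γ t`. -/
theorem jurdjevic_kp_solution {𝕜 : Type*} [RCLike 𝕜] {𝒜 : Type*} [NormedRing 𝒜]
    [NormedAlgebra 𝕜 𝒜] [CompleteSpace 𝒜] [NormedSpace ℝ 𝒜] [IsScalarTower ℝ 𝕜 𝒜]
    (A_k A_p : 𝒜) (γ : ℝ → 𝒜)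
    (hγ : γ = fun t : ℝ => exp (-((t : 𝕜) • A_k)) * exp ((t : 𝕜) • (A_k + A_p))) :
    γ 0 = 1 ∧ ∀ t : ℝ,
      HasDerivAt γ ((exp (-((t : 𝕜) • A_k)) * A_p * exp ((t : 𝕜) • A_k)) * γ t) t := by
  subst hγ
  constructor
  · simp
  · intro t
    letI alg : Algebra ℝ 𝒜 := Algebra.ofModule
      (fun r x y => by
        rw [← smul_one_smul 𝕜 r x, ← smul_one_smul 𝕜 r (x * y), smul_mul_assoc])
      (fun r x y => by
        rw [← smul_one_smul 𝕜 r y, ← smul_one_smul 𝕜 r (x * y), mul_smul_comm])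
    letI : NormedAlgebra ℝ 𝒜 := { alg with norm_smul_le := fun r x => _root_.norm_smul_le r x }
    have hf : HasDerivAt (fun s : ℝ => exp (-((s : 𝕜) • A_k)))
        (exp (-((t : 𝕜) • A_k)) * (-A_k)) t := by
      have := key_deriv (𝕜 := 𝕜) (-A_k) t
      convert this using 2 <;> simp [smul_neg]
    have hg := key_deriv' (𝕜 := 𝕜) (A_k + A_p) t
    have hprod := hf.mul hg
    convert hprod using 1
    · rfl
    have hinv : exp ((t : 𝕜) • A_k) * exp (-((t : 𝕜) • A_k)) = 1 := by
      rw [← exp_add_of_commute_of_mem_ball (𝕂 := 𝕜) ((Commute.refl ((t : 𝕜) • A_k)).neg_right)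
        ((expSeries_radius_eq_top 𝕜 𝒜).symm ▸ edist_lt_top _ _)
        ((expSeries_radius_eq_top 𝕜 𝒜).symm ▸ edist_lt_top _ _),
        add_neg_cancel, exp_zero]
    have h1 : (exp (-((t : 𝕜) • A_k)) * A_p * exp ((t : 𝕜) • A_k)) *
        (exp (-((t : 𝕜) • A_k)) * exp ((t : 𝕜) • (A_k + A_p)))
        = exp (-((t : 𝕜) • A_k)) * A_p *
          ((exp ((t : 𝕜) • A_k) * exp (-((t : 𝕜) • A_k))) *
            exp ((t : 𝕜) • (A_k + A_p))) := by
      noncomm_ring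
    rw [h1, hinv, one_mul]
    noncomm_ring
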